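/- In the Maddex model with N ≥ 1 cans, there is a plan whose final state has the jeep at position 0, one distinguished can at position D_{N−1} = ((N−1)·C + 1)/2 with content C, and the other N − 1 cans at position 0, such that the distinguished can has content C in every state of the plan (no fuel of this can is ever used). That is, the jeep can dump a full can at D_{N−1} without using fuel of that can and eventually return to the fuel station without leaving any of the other cans in the desert. -/

import Mathlib

/-- A state of Maddex' jeep problem with `N` cans: the jeep's position, its
tank content, and the position and fuel content of each can. -/
structure MaddexState (N : ℕ) where
  pos : ℝ
  tank : ℝ
  canPos : Fin N → ℝ
  canFuel : Fin N → ℝ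

/-- Admissible moves of Maddex' jeep problem with can capacity `C` and at most
`B` cans carried at a time: drive (taking along at most `B` cans located at
the jeep's position and consuming one tankload per unit of distance), move
fuel from a can at the jeep's position into the tank, move fuel between two
cans at the jeep's position, or (at the fuel station `0`) fill the tank and
any cans located at `0` up to their capacities.  Fuel is never moved from the
tank into a can. -/
inductive MaddexStep {N : ℕ} (C : ℝ) (B : ℕ) :
    MaddexState N → MaddexState N → Prop
  | drive (s : MaddexState N) (p' : ℝ) (S : Finset (Fin N))
      (hcard : S.card ≤ B) (hS : ∀ i ∈ S, s.canPos i = s.pos)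
      (hfuel : 0 ≤ s.tank - |p' - s.pos|) :
      MaddexStep C B s ⟨p', s.tank - |p' - s.pos|,
        fun i => if i ∈ S then p' else s.canPos i, s.canFuel⟩
  | canToTank (s : MaddexState N) (i : Fin N) (a : ℝ)
      (hloc : s.canPos i = s.pos) (ha : 0 ≤ a)
      (htank : s.tank + a ≤ 1) (hcan : 0 ≤ s.canFuel i - a) :
      MaddexStep C B s ⟨s.pos, s.tank + a, s.canPos,
        Function.update s.canFuel i (s.canFuel i - a)⟩
  | canToCan (s : MaddexState N) (i j : Fin N) (hij : i ≠ j) (a : ℝ)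
      (hi : s.canPos i = s.pos) (hj : s.canPos j = s.pos) (ha : 0 ≤ a)
      (hfull : s.canFuel j + a ≤ C) (hcan : 0 ≤ s.canFuel i - a) :
      MaddexStep C B s ⟨s.pos, s.tank, s.canPos,
        Function.update (Function.update s.canFuel i (s.canFuel i - a)) j
          (s.canFuel j + a)⟩
  | refill (s : MaddexState N) (hp : s.pos = 0) (t' : ℝ) (c' : Fin N → ℝ)
      (ht0 : s.tank ≤ t') (ht1 : t' ≤ 1)
      (hc : ∀ i, s.canFuel i ≤ c' i ∧ c' i ≤ C ∧
        (s.canPos i ≠ 0 → c' i = s.canFuel i)) :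
      MaddexStep C B s ⟨s.pos, t', s.canPos, c'⟩

/-- The initial state of Maddex' jeep problem: the jeep and all cans are at
the fuel station `0`, the tank is full and every can is full. -/
def maddexInit (N : ℕ) (C : ℝ) : MaddexState N :=
  ⟨0, 1, fun _ => 0, fun _ => C⟩

namespace MaddexAux

variable {N : ℕ}

/-- Steps that do not change the fuel of the distinguished can `i₀`. -/
def Step (C : ℝ) (B : ℕ) (i₀ : Fin N) (s t : MaddexState N) : Prop :=
  MaddexStep C B s t ∧ t.canFuel i₀ = s.canFuel i₀

def Reach (C : ℝ) (B : ℕ) (i₀ : Fin N) : MaddexState N → MaddexState N → Prop :=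
  Relation.ReflTransGen (Step C B i₀)

def Inv (C : ℝ) (i₀ : Fin N) (s : MaddexState N) : Prop :=
  0 ≤ s.tank ∧ s.tank ≤ 1 ∧ (∀ i, 0 ≤ s.canFuel i ∧ s.canFuel i ≤ C) ∧
    s.canFuel i₀ = C

/-- Benign change outside the "wild" set `W`: positions unchanged, fuel
unchanged, or at least `C/2`, or increased. -/
def Tame (C : ℝ) (W : Finset (Fin N)) (s t : MaddexState N) : Prop :=
  ∀ i, i ∉ W → t.canPos i = s.canPos i ∧
    (t.canFuel i = s.canFuel i ∨ C / 2 ≤ t.canFuel i ∨ s.canFuel i ≤ t.canFuel i)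

variable {C : ℝ} {B : ℕ} {i₀ : Fin N}

lemma reach_refl (s : MaddexState N) : Reach C B i₀ s s := Relation.ReflTransGen.refl

lemma reach_trans {s t u : MaddexState N} (h : Reach C B i₀ s t)
    (h' : Reach C B i₀ t u) : Reach C B i₀ s u := Relation.ReflTransGen.trans h h'

lemma tame_refl (W : Finset (Fin N)) (s : MaddexState N) : Tame C W s s := by
  intro i _; exact ⟨rfl, Or.inl rfl⟩

lemma tame_trans {W : Finset (Fin N)} {s t u : MaddexState N}
    (h : Tame C W s t) (h' : Tame C W t u) : Tame C W s u := by
  intro i hi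
  obtain ⟨hp, hf⟩ := h i hi
  obtain ⟨hp', hf'⟩ := h' i hi
  refine ⟨hp'.trans hp, ?_⟩
  rcases hf' with h1 | h1 | h1
  · rw [h1]; exact hf
  · exact Or.inr (Or.inl h1)
  · rcases hf with h2 | h2 | h2
    · rw [h2] at h1; exact Or.inr (Or.inr h1)
    · exact Or.inr (Or.inl (le_trans h2 h1))
    · exact Or.inr (Or.inr (le_trans h2 h1))

lemma tame_mono {W W' : Finset (Fin N)} (hW : W ⊆ W') {s t : MaddexState N}
    (h : Tame C W s t) : Tame C W' s t := fun i hi => h i (fun hm => hi (hW hm))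

/-- drive carrying one can -/
lemma rdrive1 (hB : 1 ≤ B) (s : MaddexState N) (y : ℝ) (X : Fin N)
    (hX : s.canPos X = s.pos) (h : |y - s.pos| ≤ s.tank) :
    ∃ t, Reach C B i₀ s t ∧ t.pos = y ∧ t.tank = s.tank - |y - s.pos| ∧
      t.canPos X = y ∧ (∀ j, j ≠ X → t.canPos j = s.canPos j) ∧
      (∀ j, t.canFuel j = s.canFuel j) := by
  refine ⟨⟨y, s.tank - |y - s.pos|,
      fun i => if i ∈ ({X} : Finset (Fin N)) then y else s.canPos i, s.canFuel⟩,
    Relation.ReflTransGen.single ⟨MaddexStep.drive s y {X} ?_ ?_ ?_, rfl⟩,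
    rfl, rfl, by simp, fun j hj => by simp [hj], fun j => rfl⟩
  · simpa using hB
  · intro i hi; simp at hi; subst hi; exact hX
  · linarith

/-- drive carrying no can -/
lemma rdrive0 (s : MaddexState N) (y : ℝ) (h : |y - s.pos| ≤ s.tank) :
    ∃ t, Reach C B i₀ s t ∧ t.pos = y ∧ t.tank = s.tank - |y - s.pos| ∧
      (∀ j, t.canPos j = s.canPos j) ∧ (∀ j, t.canFuel j = s.canFuel j) := by
  refine ⟨⟨y, s.tank - |y - s.pos|,
      fun i => if i ∈ (∅ : Finset (Fin N)) then y else s.canPos i, s.canFuel⟩,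
    Relation.ReflTransGen.single ⟨MaddexStep.drive s y ∅ ?_ ?_ ?_, rfl⟩,
    rfl, rfl, fun j => by simp, fun j => rfl⟩
  · simp
  · simp
  · linarith

/-- can-to-tank -/
lemma rsip (s : MaddexState N) (g : Fin N) (a : ℝ) (hg : g ≠ i₀)
    (hloc : s.canPos g = s.pos) (ha : 0 ≤ a) (ht : s.tank + a ≤ 1)
    (hc : a ≤ s.canFuel g) :
    ∃ t, Reach C B i₀ s t ∧ t.pos = s.pos ∧ t.tank = s.tank + a ∧
      (∀ j, t.canPos j = s.canPos j) ∧ t.canFuel g = s.canFuel g - a ∧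
      (∀ j, j ≠ g → t.canFuel j = s.canFuel j) := by
  refine ⟨_, Relation.ReflTransGen.single
    ⟨MaddexStep.canToTank s g a hloc ha ht (by linarith), ?_⟩,
    rfl, rfl, fun j => rfl, by simp, fun j hj => by simp [Function.update_of_ne hj]⟩
  simp [Function.update_of_ne (Ne.symm hg)]

/-- can-to-can (pour from g into i) -/
lemma rpour (s : MaddexState N) (g i : Fin N) (a : ℝ) (hgi : g ≠ i)
    (hg : g ≠ i₀) (hi : i ≠ i₀)
    (hlg : s.canPos g = s.pos) (hli : s.canPos i = s.pos) (ha : 0 ≤ a)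
    (hfull : s.canFuel i + a ≤ C) (hc : a ≤ s.canFuel g) :
    ∃ t, Reach C B i₀ s t ∧ t.pos = s.pos ∧ t.tank = s.tank ∧
      (∀ j, t.canPos j = s.canPos j) ∧ t.canFuel g = s.canFuel g - a ∧
      t.canFuel i = s.canFuel i + a ∧
      (∀ j, j ≠ g → j ≠ i → t.canFuel j = s.canFuel j) := by
  refine ⟨_, Relation.ReflTransGen.single
    ⟨MaddexStep.canToCan s g i hgi a hlg hli ha hfull (by linarith), ?_⟩,
    rfl, rfl, fun j => rfl, ?_, by simp, ?_⟩
  · simp [Function.update_of_ne (Ne.symm hi), Function.update_of_ne (Ne.symm hg)]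
  · simp [Function.update_of_ne hgi, Function.update_self]
  · intro j hjg hji
    simp [Function.update_of_ne hji, Function.update_of_ne hjg]

lemma dsip_leg (hB : 1 ≤ B) (hC : 0 < C) (g : Fin N) (hg : g ≠ i₀)
    (s : MaddexState N) (y τ' φ' : ℝ) (hInv : Inv C i₀ s)
    (hgp : s.canPos g = s.pos) (hd : |y - s.pos| ≤ 1)
    (hτ0 : 0 ≤ τ') (hτ1 : τ' ≤ 1) (hφ0 : 0 ≤ φ') (hφ : φ' ≤ s.canFuel g)
    (hsum : τ' + φ' = s.tank + s.canFuel g - |y - s.pos|) :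
    ∃ t, Reach C B i₀ s t ∧ Inv C i₀ t ∧ t.pos = y ∧ t.tank = τ' ∧
      t.canPos g = y ∧ t.canFuel g = φ' ∧
      (∀ j, j ≠ g → t.canPos j = s.canPos j ∧ t.canFuel j = s.canFuel j) := by
  obtain ⟨ht0, ht1, hf, hf0⟩ := hInv
  set d := |y - s.pos| with hdd
  have hd0 : 0 ≤ d := abs_nonneg _
  set a₁ := min (s.canFuel g - φ') (1 - s.tank) with ha₁
  have ha₁0 : 0 ≤ a₁ := le_min (by linarith) (by linarith)
  have ha₁τ : s.tank + a₁ ≤ 1 := by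
    have := min_le_right (s.canFuel g - φ') (1 - s.tank); linarith
  have ha₁φ : a₁ ≤ s.canFuel g := by
    have := min_le_left (s.canFuel g - φ') (1 - s.tank); linarith
  have hdle : d ≤ s.tank + a₁ := by
    have : d - s.tank ≤ a₁ := le_min (by linarith) (by linarith)
    linarith
  obtain ⟨t₁, hr₁, hp₁, ht₁, hcp₁, hcf₁g, hcf₁⟩ := rsip s g a₁ hg hgp ha₁0 ha₁τ ha₁φ
  obtain ⟨t₂, hr₂, hp₂, ht₂, hcp₂g, hcp₂, hcf₂⟩ :=
    rdrive1 (C := C) (i₀ := i₀) hB t₁ y g (by rw [hcp₁ g, hgp, hp₁])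
      (by rw [hp₁, ht₁, ← hdd]; exact hdle)
  have hyd : |y - t₁.pos| = d := by rw [hp₁]
  set a₂ := s.canFuel g - φ' - a₁ with ha₂
  have ha₂0 : 0 ≤ a₂ := by
    have := min_le_left (s.canFuel g - φ') (1 - s.tank); simp [ha₂]; linarith
  obtain ⟨t₃, hr₃, hp₃, ht₃, hcp₃, hcf₃g, hcf₃⟩ := rsip t₂ g a₂ hg
    (by rw [hcp₂g, hp₂]) ha₂0
    (by rw [ht₂, ht₁, hyd]; linarith)
    (by rw [hcf₂ g, hcf₁g]; linarith)
  refine ⟨t₃, reach_trans hr₁ (reach_trans hr₂ hr₃), ?_, ?_, ?_, ?_, ?_, ?_⟩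
  · constructor
    · rw [ht₃, ht₂, ht₁, hyd]; linarith
    refine ⟨by rw [ht₃, ht₂, ht₁, hyd]; linarith, fun i => ?_, ?_⟩
    · by_cases hig : i = g
      · subst hig
        rw [hcf₃g, hcf₂ i, hcf₁g]
        constructor
        · linarith
        · have := (hf i).2; linarith
      · rw [hcf₃ i hig, hcf₂ i, hcf₁ i hig]; exact hf i
    · rw [hcf₃ i₀ (Ne.symm hg), hcf₂ i₀, hcf₁ i₀ (Ne.symm hg)]; exact hf0
  · rw [hp₃, hp₂]
  · rw [ht₃, ht₂, ht₁, hyd]; linarith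
  · rw [hcp₃ g, hcp₂g]
  · rw [hcf₃g, hcf₂ g, hcf₁g]; linarith
  · intro j hj
    rw [hcp₃ j, hcp₂ j hj, hcp₁ j, hcf₃ j hj, hcf₂ j, hcf₁ j hj]
    exact ⟨rfl, rfl⟩

/-- drive together with one can, sipping from it en route; arbitrary final
split `(τ', φ')` of the remaining fuel. -/
lemma dsip (hB : 1 ≤ B) (hC : 0 < C) (g : Fin N) (hg : g ≠ i₀) :
    ∀ (n : ℕ) (s : MaddexState N) (y τ' φ' : ℝ), Inv C i₀ s →
      s.canPos g = s.pos → |y - s.pos| ≤ (n + 1) / 2 →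
      0 ≤ τ' → τ' ≤ 1 → 0 ≤ φ' → φ' ≤ s.canFuel g →
      τ' + φ' = s.tank + s.canFuel g - |y - s.pos| →
      ∃ t, Reach C B i₀ s t ∧ Inv C i₀ t ∧ t.pos = y ∧ t.tank = τ' ∧
        t.canPos g = y ∧ t.canFuel g = φ' ∧
        (∀ j, j ≠ g → t.canPos j = s.canPos j ∧ t.canFuel j = s.canFuel j) := by
  intro n
  induction n with
  | zero =>
    intro s y τ' φ' hInv hgp hdn hτ0 hτ1 hφ0 hφ hsum
    exact dsip_leg hB hC g hg s y τ' φ' hInv hgp (by norm_num at hdn; linarith)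
      hτ0 hτ1 hφ0 hφ hsum
  | succ n ih =>
    intro s y τ' φ' hInv hgp hdn hτ0 hτ1 hφ0 hφ hsum
    by_cases hd1 : |y - s.pos| ≤ 1
    · exact dsip_leg hB hC g hg s y τ' φ' hInv hgp hd1 hτ0 hτ1 hφ0 hφ hsum
    push_neg at hd1
    have hI := hInv
    obtain ⟨ht0, ht1, hf, hf0⟩ := hI
    -- midpoint at distance 1/2 towards y
    rcases le_total s.pos y with hdir | hdir
    · have habs : |y - s.pos| = y - s.pos := abs_of_nonneg (by linarith)
      set ym := s.pos + 1/2 with hym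
      have habs1 : |ym - s.pos| = 1/2 := by
        have h : ym - s.pos = 1/2 := by rw [hym]; ring
        rw [h, abs_of_nonneg (by norm_num)]
      have hsum' : τ' + φ' = s.tank + s.canFuel g - (y - s.pos) := by rw [hsum, habs]
      have hd1' : 1 < y - s.pos := by rw [habs] at hd1; exact hd1
      set φm := min (s.canFuel g) (s.tank + s.canFuel g - 1/2) with hφm
      have hφm0 : 0 ≤ φm := le_min (hf g).1 (by linarith)
      have hφmle : φm ≤ s.canFuel g := min_le_left _ _
      have hτm0 : 0 ≤ s.tank + s.canFuel g - 1/2 - φm := by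
        have := min_le_right (s.canFuel g) (s.tank + s.canFuel g - 1/2); linarith
      have hτm1 : s.tank + s.canFuel g - 1/2 - φm ≤ 1 := by
        rcases min_choice (s.canFuel g) (s.tank + s.canFuel g - 1/2) with h1 | h1 <;>
          rw [hφm, h1] <;> linarith
      obtain ⟨t₁, hr₁, hInv₁, hp₁, ht₁, hcp₁g, hcf₁g, hfr₁⟩ :=
        dsip_leg hB hC g hg s ym (s.tank + s.canFuel g - 1/2 - φm) φm hInv hgp
          (by rw [habs1]; norm_num) hτm0 hτm1 hφm0 hφmle (by rw [habs1]; ring)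
      have habs2 : |y - t₁.pos| = y - s.pos - 1/2 := by
        rw [hp₁, hym, abs_of_nonneg (by linarith)]; ring
      have hdn' : y - s.pos ≤ ((n:ℝ) + 1 + 1) / 2 := by
        rw [habs] at hdn; push_cast at hdn; linarith
      obtain ⟨t₂, hr₂, hInv₂, hp₂, ht₂, hcp₂g, hcf₂g, hfr₂⟩ :=
        ih t₁ y τ' φ' hInv₁ (by rw [hcp₁g, hp₁])
          (by rw [habs2]; push_cast; linarith)
          hτ0 hτ1 hφ0 (by rw [hcf₁g]; exact le_min hφ (by linarith))
          (by rw [habs2, ht₁, hcf₁g]; linarith)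
      refine ⟨t₂, reach_trans hr₁ hr₂, hInv₂, hp₂, ht₂, hcp₂g, hcf₂g, fun j hj => ?_⟩
      obtain ⟨h1, h2⟩ := hfr₁ j hj
      obtain ⟨h3, h4⟩ := hfr₂ j hj
      exact ⟨h3.trans h1, h4.trans h2⟩
    · have habs : |y - s.pos| = s.pos - y := by rw [abs_of_nonpos (by linarith)]; ring
      set ym := s.pos - 1/2 with hym
      have habs1 : |ym - s.pos| = 1/2 := by
        have h : ym - s.pos = -(1/2) := by rw [hym]; ring
        rw [h, abs_of_nonpos (by norm_num)]; norm_num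
      have hsum' : τ' + φ' = s.tank + s.canFuel g - (s.pos - y) := by rw [hsum, habs]
      have hd1' : 1 < s.pos - y := by rw [habs] at hd1; exact hd1
      set φm := min (s.canFuel g) (s.tank + s.canFuel g - 1/2) with hφm
      have hφm0 : 0 ≤ φm := le_min (hf g).1 (by linarith)
      have hφmle : φm ≤ s.canFuel g := min_le_left _ _
      have hτm0 : 0 ≤ s.tank + s.canFuel g - 1/2 - φm := by
        have := min_le_right (s.canFuel g) (s.tank + s.canFuel g - 1/2); linarith
      have hτm1 : s.tank + s.canFuel g - 1/2 - φm ≤ 1 := by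
        rcases min_choice (s.canFuel g) (s.tank + s.canFuel g - 1/2) with h1 | h1 <;>
          rw [hφm, h1] <;> linarith
      obtain ⟨t₁, hr₁, hInv₁, hp₁, ht₁, hcp₁g, hcf₁g, hfr₁⟩ :=
        dsip_leg hB hC g hg s ym (s.tank + s.canFuel g - 1/2 - φm) φm hInv hgp
          (by rw [habs1]; norm_num) hτm0 hτm1 hφm0 hφmle (by rw [habs1]; ring)
      have habs2 : |y - t₁.pos| = s.pos - y - 1/2 := by
        rw [hp₁, hym, abs_of_nonpos (by linarith)]; ring
      have hdn' : s.pos - y ≤ ((n:ℝ) + 1 + 1) / 2 := by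
        rw [habs] at hdn; push_cast at hdn; linarith
      obtain ⟨t₂, hr₂, hInv₂, hp₂, ht₂, hcp₂g, hcf₂g, hfr₂⟩ :=
        ih t₁ y τ' φ' hInv₁ (by rw [hcp₁g, hp₁])
          (by rw [habs2]; push_cast; linarith)
          hτ0 hτ1 hφ0 (by rw [hcf₁g]; exact le_min hφ (by linarith))
          (by rw [habs2, ht₁, hcf₁g]; linarith)
      refine ⟨t₂, reach_trans hr₁ hr₂, hInv₂, hp₂, ht₂, hcp₂g, hcf₂g, fun j hj => ?_⟩
      obtain ⟨h1, h2⟩ := hfr₁ j hj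
      obtain ⟨h3, h4⟩ := hfr₂ j hj
      exact ⟨h3.trans h1, h4.trans h2⟩

/-- Capability: at base `b` (given precondition `pre`) the tank can be filled
to `1` and all cans at `b` outside `EXC` to `C`. -/
def CapAt (C : ℝ) (B : ℕ) (i₀ : Fin N) (b : ℝ) (pre : MaddexState N → Prop)
    (EXC : Finset (Fin N)) : Prop :=
  ∀ s, Inv C i₀ s → s.pos = b → pre s →
    ∃ t, Reach C B i₀ s t ∧ Inv C i₀ t ∧ t.pos = b ∧ t.tank = 1 ∧
      (∀ i, t.canPos i = s.canPos i) ∧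
      (∀ i, s.canPos i = b → i ∉ EXC → t.canFuel i = C) ∧
      (∀ i ∉ EXC, t.canFuel i = s.canFuel i ∨ t.canFuel i = C) ∧
      (∀ i ∈ EXC, C / 2 ≤ t.canFuel i ∨ t.canFuel i = s.canFuel i)

lemma cap_root (hC : 0 < C) : CapAt C B i₀ 0 (fun _ => True) ∅ := by
  intro s hInv hpos _
  obtain ⟨ht0, ht1, hf, hf0⟩ := hInv
  refine ⟨⟨s.pos, 1, s.canPos,
      fun i => if s.canPos i = 0 then C else s.canFuel i⟩,
    Relation.ReflTransGen.single ⟨MaddexStep.refill s hpos 1 _ ht1 le_rfl ?_, ?_⟩,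
    ⟨zero_le_one, le_rfl, ?_, ?_⟩, hpos, rfl, fun i => rfl, ?_, ?_, by simp⟩
  · intro i
    refine ⟨?_, ?_, fun h => if_neg h⟩
    · by_cases h : s.canPos i = 0 <;> simp [h, (hf i).2]
    · by_cases h : s.canPos i = 0 <;> simp [h, (hf i).2, hC.le]
  · by_cases h : s.canPos i₀ = 0 <;> simp [h, hf0]
  · intro i
    by_cases h : s.canPos i = 0 <;> simp [h, (hf i).1, (hf i).2, hC.le]
  · by_cases h : s.canPos i₀ = 0 <;> simp [h, hf0]
  · intro i hi _; simp [hi]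
  · intro i _
    by_cases h : s.canPos i = 0 <;> simp [h]

lemma frame_tame {W : Finset (Fin N)} {g : Fin N} (hgW : g ∈ W)
    {s t : MaddexState N}
    (h : ∀ j, j ≠ g → t.canPos j = s.canPos j ∧ t.canFuel j = s.canFuel j) :
    Tame C W s t := by
  intro i hi
  have hig : i ≠ g := fun he => hi (he ▸ hgW)
  exact ⟨(h i hig).1, Or.inl (h i hig).2⟩

lemma cap_tame {EXC W : Finset (Fin N)} {s t : MaddexState N}
    (hInv : Inv C i₀ s)
    (hpos : ∀ i, t.canPos i = s.canPos i)
    (hnE : ∀ i ∉ EXC, t.canFuel i = s.canFuel i ∨ t.canFuel i = C)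
    (hE : ∀ i ∈ EXC, C / 2 ≤ t.canFuel i ∨ t.canFuel i = s.canFuel i) :
    Tame C W s t := by
  intro i _
  refine ⟨hpos i, ?_⟩
  by_cases hiE : i ∈ EXC
  · rcases hE i hiE with h | h
    · exact Or.inr (Or.inl h)
    · exact Or.inl h
  · rcases hnE i hiE with h | h
    · exact Or.inl h
    · exact Or.inr (Or.inr (h ▸ (hInv.2.2.1 i).2))

/-- Round trip from `x` to the base `b` and back out to `y`, with companion
can `g`, refilling everything at `b`; arbitrary final split `(τ', γ')` of
`1 + C - (y - b)`. -/
lemma ferry (hB : 1 ≤ B) (hC : 0 < C) {b : ℝ} {pre : MaddexState N → Prop}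
    {EXC : Finset (Fin N)} (cap : CapAt C B i₀ b pre EXC)
    {g : Fin N} (hgi : g ≠ i₀) (hgE : g ∉ EXC)
    (hps : ∀ u v, pre u → Tame C {g} u v → pre v)
    (s : MaddexState N) (x y τ' γ' : ℝ) (hInv : Inv C i₀ s) (hpre : pre s)
    (hx : s.pos = x) (hgx : s.canPos g = x) (hbx : b ≤ x)
    (hxr : x - b ≤ C / 2 + 1) (hfuel : x - b ≤ s.tank + s.canFuel g)
    (hby : b ≤ y) (hyr : y - b ≤ C / 2 + 1)
    (hτ0 : 0 ≤ τ') (hτ1 : τ' ≤ 1) (hγ0 : 0 ≤ γ') (hγC : γ' ≤ C)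
    (hsum : τ' + γ' = 1 + C - (y - b)) :
    ∃ t, Reach C B i₀ s t ∧ Inv C i₀ t ∧ pre t ∧ t.pos = y ∧ t.tank = τ' ∧
      t.canPos g = y ∧ t.canFuel g = γ' ∧
      (∀ j, j ≠ g → t.canPos j = s.canPos j) ∧
      (∀ j, j ∉ EXC → j ≠ g → (t.canFuel j = s.canFuel j ∨ t.canFuel j = C)) ∧
      (∀ j ∈ EXC, C / 2 ≤ t.canFuel j ∨ t.canFuel j = s.canFuel j) := by
  obtain ⟨n, hn⟩ := exists_nat_ge (C + 2)
  have hn2 : C / 2 + 1 ≤ ((n : ℝ) + 1) / 2 := by linarith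
  have habs1 : |b - s.pos| = x - b := by
    rw [hx, abs_of_nonpos (by linarith)]; ring
  set sum₁ := s.tank + s.canFuel g - (x - b) with hsum₁
  have hsum₁0 : 0 ≤ sum₁ := by linarith
  set φ₁ := min (s.canFuel g) sum₁ with hφ₁
  have hφ₁0 : 0 ≤ φ₁ := le_min (hInv.2.2.1 g).1 hsum₁0
  have hφ₁le : φ₁ ≤ s.canFuel g := min_le_left _ _
  have hτ₁0 : 0 ≤ sum₁ - φ₁ := by
    have := min_le_right (s.canFuel g) sum₁; linarith
  have hτ₁1 : sum₁ - φ₁ ≤ 1 := by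
    rcases min_choice (s.canFuel g) sum₁ with h1 | h1 <;> rw [hφ₁, h1] <;>
      [linarith [hInv.2.1]; linarith]
  obtain ⟨t₁, hr₁, hInv₁, hp₁, ht₁, hcp₁g, hcf₁g, hfr₁⟩ :=
    dsip hB hC g hgi n s b (sum₁ - φ₁) φ₁ hInv (hgx.trans hx.symm)
      (by rw [habs1]; linarith) hτ₁0 hτ₁1 hφ₁0 hφ₁le (by rw [habs1]; ring)
  have hpre₁ : pre t₁ := hps s t₁ hpre (frame_tame (Finset.mem_singleton_self g) hfr₁)
  obtain ⟨t₂, hr₂, hInv₂, hp₂, ht₂, hcp₂, hcfb₂, hnE₂, hE₂⟩ := cap t₁ hInv₁ hp₁ hpre₁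
  have hpre₂ : pre t₂ := hps t₁ t₂ hpre₁ (cap_tame hInv₁ hcp₂ hnE₂ hE₂)
  have hcf₂g : t₂.canFuel g = C := hcfb₂ g hcp₁g hgE
  have habs2 : |y - t₂.pos| = y - b := by
    rw [hp₂, abs_of_nonneg (by linarith)]
  obtain ⟨t₃, hr₃, hInv₃, hp₃, ht₃, hcp₃g, hcf₃g, hfr₃⟩ :=
    dsip hB hC g hgi n t₂ y τ' γ' hInv₂ (by rw [hcp₂ g, hcp₁g, hp₂])
      (by rw [habs2]; linarith) hτ0 hτ1 hγ0 (by rw [hcf₂g]; exact hγC)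
      (by rw [habs2, ht₂, hcf₂g]; linarith)
  have hpre₃ : pre t₃ := hps t₂ t₃ hpre₂ (frame_tame (Finset.mem_singleton_self g) hfr₃)
  refine ⟨t₃, reach_trans hr₁ (reach_trans hr₂ hr₃), hInv₃, hpre₃, hp₃, ht₃,
    hcp₃g, hcf₃g, ?_, ?_, ?_⟩
  · intro j hj
    rw [(hfr₃ j hj).1, hcp₂ j, (hfr₁ j hj).1]
  · intro j hjE hjg
    rw [(hfr₃ j hjg).2]
    rcases hnE₂ j hjE with h | h
    · rw [h, (hfr₁ j hjg).2]; exact Or.inl rfl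
    · exact Or.inr h
  · intro j hjE
    have hjg : j ≠ g := fun he => hgE (he ▸ hjE)
    rw [(hfr₃ j hjg).2]
    rcases hE₂ j hjE with h | h
    · exact Or.inl h
    · rw [h, (hfr₁ j hjg).2]; exact Or.inr rfl

/-- Move cargo can `X` together with companion `g` from `x` up to `b + C/2`,
with ferry resupply trips to `b`. -/
lemma moveloop_up (hB : 1 ≤ B) (hC : 0 < C) {b : ℝ} {pre : MaddexState N → Prop}
    {EXC : Finset (Fin N)} (cap : CapAt C B i₀ b pre EXC)
    {g X : Fin N} (hgi : g ≠ i₀) (hgE : g ∉ EXC) (hXg : X ≠ g)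
    (hps : ∀ u v, pre u → Tame C {X, g} u v → pre v) :
    ∀ (n : ℕ) (s : MaddexState N) (x : ℝ), Inv C i₀ s → pre s → s.pos = x →
      s.canPos g = x → s.canPos X = x → b ≤ x → x ≤ b + C / 2 →
      b + C / 2 - x ≤ n / 2 → x - b ≤ s.tank + s.canFuel g →
      ∃ t, Reach C B i₀ s t ∧ Inv C i₀ t ∧ pre t ∧ t.pos = b + C / 2 ∧
        t.canPos g = b + C / 2 ∧ t.canPos X = b + C / 2 ∧
        C / 2 ≤ t.tank + t.canFuel g ∧
        (∀ j, j ≠ g → j ≠ X → t.canPos j = s.canPos j) ∧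
        (∀ j, j ∉ EXC → j ≠ g → (t.canFuel j = s.canFuel j ∨ t.canFuel j = C)) ∧
        (∀ j ∈ EXC, C / 2 ≤ t.canFuel j ∨ t.canFuel j = s.canFuel j) := by
  have hps' : ∀ u v, pre u → Tame C {g} u v → pre v := fun u v hu ht =>
    hps u v hu (tame_mono (by intro i hi; simp at hi; simp [hi]) ht)
  intro n
  induction n with
  | zero =>
    intro s x hInv hpre hx hgx hXx hbx hxr hn hfuel
    have hxe : x = b + C / 2 := by norm_num at hn; linarith
    subst hxe
    exact ⟨s, reach_refl s, hInv, hpre, hx, hgx, hXx, by linarith,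
      fun j _ _ => rfl, fun j _ _ => Or.inl rfl, fun j _ => Or.inr rfl⟩
  | succ n ih =>
    intro s x hInv hpre hx hgx hXx hbx hxr hn hfuel
    by_cases hend : b + C / 2 - x ≤ 0
    · have hxe : x = b + C / 2 := by linarith
      subst hxe
      exact ⟨s, reach_refl s, hInv, hpre, hx, hgx, hXx, by linarith,
        fun j _ _ => rfl, fun j _ _ => Or.inl rfl, fun j _ => Or.inr rfl⟩
    push_neg at hend
    set δ := min (1/2 : ℝ) (b + C / 2 - x) with hδ
    have hδ0 : 0 < δ := lt_min (by norm_num) hend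
    have hδh : δ ≤ 1/2 := min_le_left _ _
    have hδr : δ ≤ b + C / 2 - x := min_le_right _ _
    obtain ⟨t₁, hr₁, hInv₁, hpre₁, hp₁, ht₁, hcp₁g, hcf₁g, hfr₁, hnE₁, hE₁⟩ :=
      ferry hB hC cap hgi hgE hps' s x (x + δ) 1 (C - (x + δ - b)) hInv hpre hx hgx
        hbx (by linarith) hfuel (by linarith) (by linarith) zero_le_one le_rfl
        (by linarith) (by linarith) (by ring)
    have habs2 : |x - (x + δ)| = δ := by
      rw [show x - (x + δ) = -δ by ring, abs_neg, abs_of_nonneg hδ0.le]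
    have habs2' : |x + δ - x| = δ := by
      rw [show x + δ - x = δ by ring, abs_of_nonneg hδ0.le]
    obtain ⟨t₂, hr₂, hp₂, ht₂, hcp₂, hcf₂⟩ :=
      rdrive0 (C := C) (B := B) (i₀ := i₀) t₁ x
        (by rw [hp₁, ht₁, habs2]; linarith)
    obtain ⟨t₃, hr₃, hp₃, ht₃, hcp₃X, hcp₃, hcf₃⟩ :=
      rdrive1 (C := C) (i₀ := i₀) hB t₂ (x + δ) X
        (by rw [hcp₂ X, hfr₁ X (Ne.symm (fun h => hXg h.symm)), hXx, hp₂])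
        (by rw [hp₂, ht₂, ht₁, hp₁, habs2, habs2']; linarith)
    have habs3 : |x + δ - t₂.pos| = δ := by rw [hp₂]; exact habs2'
    have hInv₃ : Inv C i₀ t₃ := by
      refine ⟨?_, ?_, fun i => ?_, ?_⟩
      · rw [ht₃, habs3, ht₂, ht₁, hp₁, habs2]; linarith
      · rw [ht₃, habs3, ht₂, ht₁, hp₁, habs2]; linarith
      · rw [hcf₃ i, hcf₂ i]; exact hInv₁.2.2.1 i
      · rw [hcf₃ i₀, hcf₂ i₀]; exact hInv₁.2.2.2
    have hpre₃ : pre t₃ := by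
      refine hps t₁ t₃ hpre₁ ?_
      intro i hi
      simp at hi
      rw [hcf₃ i, hcf₂ i, hcp₃ i hi.1, hcp₂ i]
      exact ⟨rfl, Or.inl rfl⟩
    obtain ⟨t₄, hr₄, hInv₄, hpre₄, hp₄, hcp₄g, hcp₄X, hfuel₄, hfr₄, hnE₄, hE₄⟩ :=
      ih t₃ (x + δ) hInv₃ hpre₃ hp₃
        (by rw [hcp₃ g hXg.symm, hcp₂ g, hcp₁g])
        hcp₃X (by linarith) (by linarith)
        (by have h0 : (0:ℝ) ≤ (n:ℝ) := Nat.cast_nonneg n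
            push_cast at hn
            rcases min_choice (1/2 : ℝ) (b + C / 2 - x) with h1 | h1 <;>
              rw [hδ, h1] <;> linarith)
        (by rw [ht₃, habs3, ht₂, ht₁, hp₁, habs2, hcf₃ g, hcf₂ g, hcf₁g]; linarith)
    refine ⟨t₄, reach_trans hr₁ (reach_trans hr₂ (reach_trans hr₃ hr₄)), hInv₄,
      hpre₄, hp₄, hcp₄g, hcp₄X, hfuel₄, ?_, ?_, ?_⟩
    · intro j hjg hjX
      rw [hfr₄ j hjg hjX, hcp₃ j hjX, hcp₂ j, hfr₁ j hjg]
    · intro j hjE hjg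
      rcases hnE₄ j hjE hjg with h | h
      · rw [h, hcf₃ j, hcf₂ j]; exact hnE₁ j hjE hjg
      · exact Or.inr h
    · intro j hjE
      have hjg : j ≠ g := fun he => hgE (he ▸ hjE)
      rcases hE₄ j hjE with h | h
      · exact Or.inl h
      · rw [h, hcf₃ j, hcf₂ j]; exact hE₁ j hjE

/-- Move cargo can `X` together with companion `g` from `x` down to `b`. -/
lemma moveloop_down (hB : 1 ≤ B) (hC : 0 < C) {b : ℝ} {pre : MaddexState N → Prop}
    {EXC : Finset (Fin N)} (cap : CapAt C B i₀ b pre EXC)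
    {g X : Fin N} (hgi : g ≠ i₀) (hgE : g ∉ EXC) (hXg : X ≠ g)
    (hps : ∀ u v, pre u → Tame C {X, g} u v → pre v) :
    ∀ (n : ℕ) (s : MaddexState N) (x : ℝ), Inv C i₀ s → pre s → s.pos = x →
      s.canPos g = x → s.canPos X = x → b ≤ x → x ≤ b + C / 2 →
      x - b ≤ n / 2 → x - b ≤ s.tank + s.canFuel g →
      ∃ t, Reach C B i₀ s t ∧ Inv C i₀ t ∧ pre t ∧ t.pos = b ∧
        t.canPos g = b ∧ t.canPos X = b ∧
        (∀ j, j ≠ g → j ≠ X → t.canPos j = s.canPos j) ∧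
        (∀ j, j ∉ EXC → j ≠ g → (t.canFuel j = s.canFuel j ∨ t.canFuel j = C)) ∧
        (∀ j ∈ EXC, C / 2 ≤ t.canFuel j ∨ t.canFuel j = s.canFuel j) := by
  have hps' : ∀ u v, pre u → Tame C {g} u v → pre v := fun u v hu ht =>
    hps u v hu (tame_mono (by intro i hi; simp at hi; simp [hi]) ht)
  intro n
  induction n with
  | zero =>
    intro s x hInv hpre hx hgx hXx hbx hxr hn hfuel
    have hxe : x = b := by norm_num at hn; linarith
    subst hxe
    exact ⟨s, reach_refl s, hInv, hpre, hx, hgx, hXx,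
      fun j _ _ => rfl, fun j _ _ => Or.inl rfl, fun j _ => Or.inr rfl⟩
  | succ n ih =>
    intro s x hInv hpre hx hgx hXx hbx hxr hn hfuel
    by_cases hend : x - b ≤ 0
    · have hxe : x = b := by linarith
      subst hxe
      exact ⟨s, reach_refl s, hInv, hpre, hx, hgx, hXx,
        fun j _ _ => rfl, fun j _ _ => Or.inl rfl, fun j _ => Or.inr rfl⟩
    push_neg at hend
    set δ := min (1/2 : ℝ) (x - b) with hδ
    have hδ0 : 0 < δ := lt_min (by norm_num) hend
    have hδh : δ ≤ 1/2 := min_le_left _ _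
    have hδr : δ ≤ x - b := min_le_right _ _
    obtain ⟨t₁, hr₁, hInv₁, hpre₁, hp₁, ht₁, hcp₁g, hcf₁g, hfr₁, hnE₁, hE₁⟩ :=
      ferry hB hC cap hgi hgE hps' s x (x - δ) 1 (C - (x - δ - b)) hInv hpre hx hgx
        hbx (by linarith) hfuel (by linarith) (by linarith) zero_le_one le_rfl
        (by linarith) (by linarith) (by ring)
    have habs2 : |x - (x - δ)| = δ := by
      rw [show x - (x - δ) = δ by ring, abs_of_nonneg hδ0.le]
    have habs2' : |x - δ - x| = δ := by
      rw [show x - δ - x = -δ by ring, abs_neg, abs_of_nonneg hδ0.le]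
    obtain ⟨t₂, hr₂, hp₂, ht₂, hcp₂, hcf₂⟩ :=
      rdrive0 (C := C) (B := B) (i₀ := i₀) t₁ x
        (by rw [hp₁, ht₁, habs2]; linarith)
    obtain ⟨t₃, hr₃, hp₃, ht₃, hcp₃X, hcp₃, hcf₃⟩ :=
      rdrive1 (C := C) (i₀ := i₀) hB t₂ (x - δ) X
        (by rw [hcp₂ X, hfr₁ X (Ne.symm (fun h => hXg h.symm)), hXx, hp₂])
        (by rw [hp₂, ht₂, ht₁, hp₁, habs2, habs2']; linarith)
    have habs3 : |x - δ - t₂.pos| = δ := by rw [hp₂]; exact habs2'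
    have hInv₃ : Inv C i₀ t₃ := by
      refine ⟨?_, ?_, fun i => ?_, ?_⟩
      · rw [ht₃, habs3, ht₂, ht₁, hp₁, habs2]; linarith
      · rw [ht₃, habs3, ht₂, ht₁, hp₁, habs2]; linarith
      · rw [hcf₃ i, hcf₂ i]; exact hInv₁.2.2.1 i
      · rw [hcf₃ i₀, hcf₂ i₀]; exact hInv₁.2.2.2
    have hpre₃ : pre t₃ := by
      refine hps t₁ t₃ hpre₁ ?_
      intro i hi
      simp at hi
      rw [hcf₃ i, hcf₂ i, hcp₃ i hi.1, hcp₂ i]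
      exact ⟨rfl, Or.inl rfl⟩
    obtain ⟨t₄, hr₄, hInv₄, hpre₄, hp₄, hcp₄g, hcp₄X, hfr₄, hnE₄, hE₄⟩ :=
      ih t₃ (x - δ) hInv₃ hpre₃ hp₃
        (by rw [hcp₃ g hXg.symm, hcp₂ g, hcp₁g])
        hcp₃X (by linarith) (by linarith)
        (by have h0 : (0:ℝ) ≤ (n:ℝ) := Nat.cast_nonneg n
            push_cast at hn
            rcases min_choice (1/2 : ℝ) (x - b) with h1 | h1 <;>
              rw [hδ, h1] <;> linarith)
        (by rw [ht₃, habs3, ht₂, ht₁, hp₁, habs2, hcf₃ g, hcf₂ g, hcf₁g]; linarith)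
    refine ⟨t₄, reach_trans hr₁ (reach_trans hr₂ (reach_trans hr₃ hr₄)), hInv₄,
      hpre₄, hp₄, hcp₄g, hcp₄X, ?_, ?_, ?_⟩
    · intro j hjg hjX
      rw [hfr₄ j hjg hjX, hcp₃ j hjX, hcp₂ j, hfr₁ j hjg]
    · intro j hjE hjg
      rcases hnE₄ j hjE hjg with h | h
      · rw [h, hcf₃ j, hcf₂ j]; exact hnE₁ j hjE hjg
      · exact Or.inr h
    · intro j hjE
      have hjg : j ≠ g := fun he => hgE (he ▸ hjE)
      rcases hE₄ j hjE with h | h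
      · exact Or.inl h
      · rw [h, hcf₃ j, hcf₂ j]; exact hE₁ j hjE

/-- Fill can `i` (located at `b + C/2`) up to `C` by repeated ferry trips. -/
lemma fillcan (hB : 1 ≤ B) (hC : 0 < C) {b : ℝ} {pre : MaddexState N → Prop}
    {EXC : Finset (Fin N)} (cap : CapAt C B i₀ b pre EXC)
    {g i : Fin N} (hgi : g ≠ i₀) (hgE : g ∉ EXC) (hig : i ≠ g) (hii : i ≠ i₀)
    (hiE : i ∉ EXC)
    (hps : ∀ u v, pre u → Tame C {g} u v → pre v) :
    ∀ (m : ℕ) (s : MaddexState N), Inv C i₀ s → pre s → s.pos = b + C / 2 →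
      s.canPos g = b + C / 2 → C / 2 ≤ s.canFuel g → s.canPos i = b + C / 2 →
      C - s.canFuel i ≤ m * min 1 (C / 2) →
      ∃ t, Reach C B i₀ s t ∧ Inv C i₀ t ∧ pre t ∧ t.pos = b + C / 2 ∧
        (∀ j, t.canPos j = s.canPos j) ∧ C / 2 ≤ t.canFuel g ∧
        t.canFuel i = C ∧
        (∀ j, j ∉ EXC → j ≠ g → j ≠ i → (t.canFuel j = s.canFuel j ∨ t.canFuel j = C)) ∧
        (∀ j ∈ EXC, C / 2 ≤ t.canFuel j ∨ t.canFuel j = s.canFuel j) := by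
  set sp := min 1 (C / 2) with hsp
  have hsp0 : 0 < sp := lt_min one_pos (by linarith)
  intro m
  induction m with
  | zero =>
    intro s hInv hpre hx hgx hgf hix hdef
    norm_num at hdef
    have : s.canFuel i = C := le_antisymm (hInv.2.2.1 i).2 (by linarith)
    exact ⟨s, reach_refl s, hInv, hpre, hx, fun j => rfl, hgf, this,
      fun j _ _ _ => Or.inl rfl, fun j _ => Or.inr rfl⟩
  | succ m ih =>
    intro s hInv hpre hx hgx hgf hix hdef
    set γ' := min C (C / 2 + 1) with hγ'
    have hγ'1 : C / 2 ≤ γ' := le_min (by linarith) (by linarith)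
    have hγ'2 : γ' ≤ C := min_le_left _ _
    have hγ'3 : γ' ≤ C / 2 + 1 := min_le_right _ _
    have hspγ : C / 2 + sp ≤ γ' := by
      rcases le_total 1 (C / 2) with h1 | h1
      · rw [hsp, min_eq_left h1, hγ', min_eq_right (by linarith)]
      · rw [hsp, min_eq_right h1, hγ', min_eq_left (by linarith)]; linarith
    obtain ⟨t₁, hr₁, hInv₁, hpre₁, hp₁, ht₁, hcp₁g, hcf₁g, hfr₁, hnE₁, hE₁⟩ :=
      ferry hB hC cap hgi hgE hps s (b + C / 2) (b + C / 2) (1 + C / 2 - γ') γ'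
        hInv hpre hx hgx (by linarith) (by linarith)
        (by have := hInv.1; linarith) (by linarith) (by linarith)
        (by linarith) (by linarith) (by linarith) hγ'2 (by ring)
    set a := min sp (C - t₁.canFuel i) with ha
    have hif : 0 ≤ C - t₁.canFuel i := by linarith [(hInv₁.2.2.1 i).2]
    have ha0 : 0 ≤ a := le_min hsp0.le hif
    have hasp : a ≤ sp := min_le_left _ _
    obtain ⟨t₂, hr₂, hp₂, ht₂, hcp₂, hcf₂g, hcf₂i, hcf₂⟩ :=
      rpour (C := C) (B := B) t₁ g i a (Ne.symm hig) hgi hii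
        (by rw [hcp₁g, hp₁]) (by rw [hfr₁ i hig, hix, hp₁]) ha0
        (by have := min_le_right sp (C - t₁.canFuel i); linarith)
        (by rw [hcf₁g]; linarith)
    have hInv₂ : Inv C i₀ t₂ := by
      refine ⟨by rw [ht₂, ht₁]; linarith, by rw [ht₂, ht₁]; linarith, fun j => ?_, ?_⟩
      · by_cases hjg : j = g
        · subst hjg; rw [hcf₂g, hcf₁g]; constructor <;> linarith
        by_cases hji : j = i
        · rw [hji, hcf₂i]
          have hmr : a ≤ C - t₁.canFuel i := by rw [ha]; exact min_le_right _ _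
          exact ⟨by linarith [(hInv₁.2.2.1 i).1], by linarith⟩
        · rw [hcf₂ j hjg hji]; exact hInv₁.2.2.1 j
      · rw [hcf₂ i₀ (Ne.symm hgi) (Ne.symm hii)]; exact hInv₁.2.2.2
    have hpre₂ : pre t₂ := by
      refine hps t₁ t₂ hpre₁ ?_
      intro j hj
      simp at hj
      refine ⟨hcp₂ j, ?_⟩
      by_cases hji : j = i
      · rw [hji, hcf₂i]; exact Or.inr (Or.inr (by linarith))
      · rw [hcf₂ j hj hji]; exact Or.inl rfl
    obtain ⟨t₃, hr₃, hInv₃, hpre₃, hp₃, hcp₃, hgf₃, hif₃, hnE₃, hE₃⟩ :=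
      ih t₂ hInv₂ hpre₂ (by rw [hp₂, hp₁])
        (by rw [hcp₂ g, hcp₁g]) (by rw [hcf₂g, hcf₁g]; linarith)
        (by rw [hcp₂ i, hfr₁ i hig, hix])
        (by push_cast at hdef
            have hm0 : (0:ℝ) ≤ (m:ℝ) * sp := by positivity
            rcases min_choice sp (C - t₁.canFuel i) with h1 | h1
            · rcases hnE₁ i hiE hig with h2 | h2
              · rw [hcf₂i, ha, h1, h2]; linarith
              · rw [hcf₂i, ha, h1, h2]; linarith
            · rw [hcf₂i, ha, h1]; linarith)
    refine ⟨t₃, reach_trans hr₁ (reach_trans hr₂ hr₃), hInv₃, hpre₃, hp₃, ?_, hgf₃,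
      hif₃, ?_, ?_⟩
    · intro j
      rw [hcp₃ j, hcp₂ j]
      by_cases hjg : j = g
      · subst hjg; rw [hcp₁g, hgx]
      · rw [hfr₁ j hjg]
    · intro j hjE hjg hji
      rcases hnE₃ j hjE hjg hji with h | h
      · rw [h, hcf₂ j hjg hji]; exact hnE₁ j hjE hjg
      · exact Or.inr h
    · intro j hjE
      have hjg : j ≠ g := fun he => hgE (he ▸ hjE)
      rcases hE₃ j hjE with h | h
      · exact Or.inl h
      · rw [h]
        have hji : j ≠ i := fun he => hiE (he ▸ hjE)
        rw [hcf₂ j hjg hji]; exact hE₁ j hjE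

/-- Fill all cans at `b + C/2` (other than `g`) to `C`. -/
lemma fillall (hB : 1 ≤ B) (hC : 0 < C) {b : ℝ} {pre : MaddexState N → Prop}
    {EXC : Finset (Fin N)} (cap : CapAt C B i₀ b pre EXC)
    {g : Fin N} (hgi : g ≠ i₀) (hgE : g ∉ EXC)
    (hps : ∀ u v, pre u → Tame C {g} u v → pre v) :
    ∀ (n : ℕ) (s : MaddexState N), Inv C i₀ s → pre s → s.pos = b + C / 2 →
      s.canPos g = b + C / 2 → C / 2 ≤ s.canFuel g →
      (∀ j ∈ EXC, s.canPos j ≠ b + C / 2) →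
      (Finset.univ.filter
        (fun j => s.canPos j = b + C / 2 ∧ s.canFuel j ≠ C ∧ j ≠ g)).card ≤ n →
      ∃ t, Reach C B i₀ s t ∧ Inv C i₀ t ∧ pre t ∧ t.pos = b + C / 2 ∧
        (∀ j, t.canPos j = s.canPos j) ∧ C / 2 ≤ t.canFuel g ∧
        (∀ j, t.canPos j = b + C / 2 → j ≠ g → t.canFuel j = C) ∧
        (∀ j, j ∉ EXC → j ≠ g → (t.canFuel j = s.canFuel j ∨ t.canFuel j = C)) ∧
        (∀ j ∈ EXC, C / 2 ≤ t.canFuel j ∨ t.canFuel j = s.canFuel j) := by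
  intro n
  induction n with
  | zero =>
    intro s hInv hpre hx hgx hgf hE hcard
    refine ⟨s, reach_refl s, hInv, hpre, hx, fun j => rfl, hgf, ?_,
      fun j _ _ => Or.inl rfl, fun j _ => Or.inr rfl⟩
    intro j hj hjg
    by_contra hne
    have : j ∈ Finset.univ.filter
        (fun j => s.canPos j = b + C / 2 ∧ s.canFuel j ≠ C ∧ j ≠ g) := by
      simp [hj, hne, hjg]
    rw [Finset.card_eq_zero.mp (Nat.le_zero.mp hcard)] at this
    exact absurd this (Finset.notMem_empty j)
  | succ n ih =>
    intro s hInv hpre hx hgx hgf hE hcard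
    set S := Finset.univ.filter
        (fun j => s.canPos j = b + C / 2 ∧ s.canFuel j ≠ C ∧ j ≠ g) with hS
    by_cases hSe : S = ∅
    · refine ⟨s, reach_refl s, hInv, hpre, hx, fun j => rfl, hgf, ?_,
        fun j _ _ => Or.inl rfl, fun j _ => Or.inr rfl⟩
      intro j hj hjg
      by_contra hne
      have : j ∈ S := by rw [hS]; simp [hj, hne, hjg]
      rw [hSe] at this
      exact absurd this (Finset.notMem_empty j)
    obtain ⟨i, hiS⟩ := Finset.nonempty_iff_ne_empty.mpr hSe
    have hiS' := hiS
    rw [hS, Finset.mem_filter] at hiS'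
    obtain ⟨-, hipos, hifuel, hig⟩ := hiS'
    have hii : i ≠ i₀ := fun he => hifuel (he ▸ hInv.2.2.2)
    have hiE : i ∉ EXC := fun he => (hE i he) hipos
    set sp := min 1 (C / 2) with hsp
    have hsp0 : 0 < sp := lt_min one_pos (by linarith)
    obtain ⟨m, hm⟩ := exists_nat_ge (C / sp)
    have hmC : C ≤ m * sp := by
      rw [div_le_iff₀ hsp0] at hm
      linarith
    obtain ⟨t₁, hr₁, hInv₁, hpre₁, hp₁, hcp₁, hgf₁, hif₁, hnE₁, hE₁⟩ :=
      fillcan hB hC cap hgi hgE hig hii hiE hps m s hInv hpre hx hgx hgf hipos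
        (by rw [← hsp]; linarith [(hInv.2.2.1 i).1])
    have hcard₁ : (Finset.univ.filter
        (fun j => t₁.canPos j = b + C / 2 ∧ t₁.canFuel j ≠ C ∧ j ≠ g)).card ≤ n := by
      have hsub : Finset.univ.filter
          (fun j => t₁.canPos j = b + C / 2 ∧ t₁.canFuel j ≠ C ∧ j ≠ g) ⊆ S.erase i := by
        intro j hj
        rw [Finset.mem_filter] at hj
        obtain ⟨-, h1, h2, h3⟩ := hj
        have hji : j ≠ i := fun he => h2 (he ▸ hif₁)
        rw [Finset.mem_erase]
        refine ⟨hji, ?_⟩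
        rw [hS, Finset.mem_filter]
        have hjE : j ∉ EXC := fun he => (hE j he) (by rw [← hcp₁ j]; exact h1)
        refine ⟨Finset.mem_univ j, by rw [← hcp₁ j]; exact h1, ?_, h3⟩
        rcases hnE₁ j hjE h3 hji with h | h
        · rw [← h]; exact h2
        · exact absurd h h2
      have h1 := Finset.card_le_card hsub
      have h2 := Finset.card_erase_of_mem hiS
      omega
    obtain ⟨t₂, hr₂, hInv₂, hpre₂, hp₂, hcp₂, hgf₂, hfull₂, hnE₂, hE₂⟩ :=
      ih t₁ hInv₁ hpre₁ hp₁ (by rw [hcp₁ g, hgx]) hgf₁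
        (fun j hj => by rw [hcp₁ j]; exact hE j hj) hcard₁
    refine ⟨t₂, reach_trans hr₁ hr₂, hInv₂, hpre₂, hp₂,
      fun j => (hcp₂ j).trans (hcp₁ j), hgf₂, ?_, ?_, ?_⟩
    · intro j hj hjg
      exact hfull₂ j hj hjg
    · intro j hjE hjg
      by_cases hji : j = i
      · subst hji
        rcases hnE₂ j hjE hjg with h | h
        · rw [h, hif₁]; exact Or.inr rfl
        · exact Or.inr h
      · rcases hnE₂ j hjE hjg with h | h
        · rw [h]; exact hnE₁ j hjE hjg hji
        · exact Or.inr h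
    · intro j hjE
      rcases hE₂ j hjE with h | h
      · exact Or.inl h
      · rw [h]; exact hE₁ j hjE

/-- Derived capability at base `b + C/2`, with ferry can `g`. -/
lemma capderive (hB : 1 ≤ B) (hC : 0 < C) {b : ℝ} {pre : MaddexState N → Prop}
    {EXC : Finset (Fin N)} (cap : CapAt C B i₀ b pre EXC)
    {g : Fin N} (hgi : g ≠ i₀) (hgE : g ∉ EXC)
    (hps : ∀ u v, pre u → Tame C {g} u v → pre v) :
    CapAt C B i₀ (b + C / 2)
      (fun s => pre s ∧ s.canPos g = b + C / 2 ∧ C / 2 ≤ s.canFuel g ∧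
        (∀ j ∈ EXC, s.canPos j < b + C / 2))
      (insert g EXC) := by
  intro s hInv hpos hpre'
  obtain ⟨hpre, hgx, hgf, hEpos⟩ := hpre'
  obtain ⟨t₁, hr₁, hInv₁, hpre₁, hp₁, hcp₁, hgf₁, hfull₁, hnE₁, hE₁⟩ :=
    fillall hB hC cap hgi hgE hps _ s hInv hpre hpos hgx hgf
      (fun j hj => ne_of_lt (hEpos j hj)) le_rfl
  obtain ⟨t₂, hr₂, hInv₂, hpre₂, hp₂, ht₂, hcp₂g, hcf₂g, hfr₂, hnE₂, hE₂⟩ :=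
    ferry hB hC cap hgi hgE hps t₁ (b + C / 2) (b + C / 2) 1 (C / 2)
      hInv₁ hpre₁ hp₁ (by rw [hcp₁ g, hgx]) (by linarith) (by linarith)
      (by linarith [hInv₁.1]) (by linarith) (by linarith)
      zero_le_one le_rfl (by linarith) (by linarith) (by ring)
  refine ⟨t₂, reach_trans hr₁ hr₂, hInv₂, hp₂, ht₂, ?_, ?_, ?_, ?_⟩
  · intro i
    by_cases hig : i = g
    · subst hig; rw [hcp₂g, hgx]
    · rw [hfr₂ i hig, hcp₁ i]
  · intro i hix hiE
    have hig : i ≠ g := fun he => hiE (he ▸ Finset.mem_insert_self g EXC)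
    have hiE' : i ∉ EXC := fun he => hiE (Finset.mem_insert_of_mem he)
    have h1 : t₁.canFuel i = C := hfull₁ i (by rw [hcp₁ i]; exact hix) hig
    rcases hnE₂ i hiE' hig with h | h
    · rw [h, h1]
    · exact h
  · intro i hiE
    have hig : i ≠ g := fun he => hiE (he ▸ Finset.mem_insert_self g EXC)
    have hiE' : i ∉ EXC := fun he => hiE (Finset.mem_insert_of_mem he)
    rcases hnE₂ i hiE' hig with h | h
    · rcases hnE₁ i hiE' hig with h2 | h2
      · rw [h, h2]; exact Or.inl rfl
      · rw [h, h2]; exact Or.inr rfl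
    · exact Or.inr h
  · intro i hiE
    by_cases hig : i = g
    · subst hig; rw [hcf₂g]; exact Or.inl le_rfl
    · have hiE' : i ∈ EXC := by
        rcases Finset.mem_insert.mp hiE with h | h
        · exact absurd h hig
        · exact h
      rcases hE₂ i hiE' with h | h
      · exact Or.inl h
      · rw [h]
        rcases hE₁ i hiE' with h2 | h2
        · exact Or.inl h2
        · rw [h2]; exact Or.inr rfl

lemma dsip_any (hB : 1 ≤ B) (hC : 0 < C) (g : Fin N) (hg : g ≠ i₀)
    (n : ℕ) (s : MaddexState N) (y : ℝ) (hInv : Inv C i₀ s)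
    (hgp : s.canPos g = s.pos) (hd : |y - s.pos| ≤ ((n : ℝ) + 1) / 2)
    (hfuel : |y - s.pos| ≤ s.tank + s.canFuel g) :
    ∃ t, Reach C B i₀ s t ∧ Inv C i₀ t ∧ t.pos = y ∧ t.canPos g = y ∧
      (∀ j, j ≠ g → t.canPos j = s.canPos j ∧ t.canFuel j = s.canFuel j) := by
  obtain ⟨ht0, ht1, hf, hf0⟩ := hInv
  have hsum0 : 0 ≤ s.tank + s.canFuel g - |y - s.pos| := by linarith
  have hφ'0 : 0 ≤ min (s.canFuel g) (s.tank + s.canFuel g - |y - s.pos|) :=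
    le_min (hf g).1 hsum0
  have hτ'0 : 0 ≤ s.tank + s.canFuel g - |y - s.pos| -
      min (s.canFuel g) (s.tank + s.canFuel g - |y - s.pos|) := by
    have := min_le_right (s.canFuel g) (s.tank + s.canFuel g - |y - s.pos|); linarith
  have hd0 : 0 ≤ |y - s.pos| := abs_nonneg _
  have hτ'1 : s.tank + s.canFuel g - |y - s.pos| -
      min (s.canFuel g) (s.tank + s.canFuel g - |y - s.pos|) ≤ 1 := by
    rcases min_choice (s.canFuel g) (s.tank + s.canFuel g - |y - s.pos|) with h1 | h1 <;>
      rw [h1] <;> linarith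
  obtain ⟨t, hr, hInv', hp, ht, hcg, hcf, hfr⟩ :=
    dsip hB hC g hg n s y _ _ ⟨ht0, ht1, hf, hf0⟩ hgp hd hτ'0 hτ'1 hφ'0
      (min_le_left _ _) (by ring)
  exact ⟨t, hr, hInv', hp, hcg, hfr⟩


/-- Haul all cans in `l` from `b` up to `b + C/2` one at a time. -/
lemma setup_loop (hB : 1 ≤ B) (hC : 0 < C) {b : ℝ} {pre : MaddexState N → Prop}
    {EXC : Finset (Fin N)} (cap : CapAt C B i₀ b pre EXC)
    {g : Fin N} (hgi : g ≠ i₀) (hgE : g ∉ EXC) :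
    ∀ (l : List (Fin N)), l.Nodup → (∀ X ∈ l, X ≠ g ∧ X ∉ EXC) →
      (∀ u v, pre u → Tame C (insert g l.toFinset) u v → pre v) →
      ∀ (s : MaddexState N), Inv C i₀ s → pre s → s.pos = b →
      s.canPos g = b → (∀ X ∈ l, s.canPos X = b) →
      ∃ t, Reach C B i₀ s t ∧ Inv C i₀ t ∧ pre t ∧ t.pos = b ∧
        t.canPos g = b ∧ (∀ X ∈ l, t.canPos X = b + C / 2) ∧
        (∀ j, j ≠ g → j ∉ l → t.canPos j = s.canPos j) ∧
        (∀ j, j ∉ EXC → j ≠ g → (t.canFuel j = s.canFuel j ∨ t.canFuel j = C)) ∧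
        (∀ j ∈ EXC, C / 2 ≤ t.canFuel j ∨ t.canFuel j = s.canFuel j) := by
  intro l
  induction l with
  | nil =>
    intro _ _ _ s hInv hpre hx hgx _
    exact ⟨s, reach_refl s, hInv, hpre, hx, hgx, fun X hX => absurd hX (by simp),
      fun j _ _ => rfl, fun j _ _ => Or.inl rfl, fun j _ => Or.inr rfl⟩
  | cons X l' ih =>
    intro hnd hl hps s hInv hpre hx hgx hls
    obtain ⟨hXg, hXE⟩ := hl X (by simp)
    have hXmem : X ∈ insert g (X :: l').toFinset := by simp
    have hgmem : g ∈ insert g (X :: l').toFinset := Finset.mem_insert_self _ _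
    have hps' : ∀ u v, pre u → Tame C {g} u v → pre v := fun u v hu ht =>
      hps u v hu (tame_mono (by intro i hi; simp at hi; simp [hi]) ht)
    have hpsX : ∀ u v, pre u → Tame C {X, g} u v → pre v := fun u v hu ht =>
      hps u v hu (tame_mono (by intro i hi; simp at hi; rcases hi with h | h <;> simp [h]) ht)
    obtain ⟨n, hn⟩ := exists_nat_ge C
    obtain ⟨t₁, hr₁, hInv₁, hpre₁, hp₁, ht₁, hcp₁g, hcf₁g, hfr₁, hnE₁, hE₁⟩ :=
      ferry hB hC cap hgi hgE hps' s b b 1 C hInv hpre hx hgx le_rfl (by linarith)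
        (by linarith [hInv.1, (hInv.2.2.1 g).1]) le_rfl (by linarith)
        zero_le_one le_rfl hC.le le_rfl (by ring)
    obtain ⟨t₂, hr₂, hInv₂, hpre₂, hp₂, hcp₂g, hcp₂X, hfuel₂, hfr₂, hnE₂, hE₂⟩ :=
      moveloop_up hB hC cap hgi hgE hXg hpsX n t₁ b hInv₁ hpre₁ hp₁ hcp₁g
        (by rw [hfr₁ X hXg]; exact hls X (by simp))
        le_rfl (by linarith) (by simp; linarith)
        (by rw [ht₁, hcf₁g]; linarith [hInv.1])
    have habs : |b - t₂.pos| = C / 2 := by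
      rw [hp₂, abs_of_nonpos (by linarith)]; ring
    obtain ⟨t₃, hr₃, hInv₃, hp₃, hcp₃g, hfr₃⟩ :=
      dsip_any hB hC g hgi n t₂ b hInv₂ (by rw [hcp₂g, hp₂])
        (by rw [habs]; linarith) (by rw [habs]; linarith)
    have hpre₃ : pre t₃ := hps' t₂ t₃ hpre₂ (frame_tame (Finset.mem_singleton_self g) hfr₃)
    obtain ⟨t₄, hr₄, hInv₄, hpre₄, hp₄, hcp₄g, hl₄, hfr₄, hnE₄, hE₄⟩ :=
      ih (List.Nodup.of_cons hnd) (fun Y hY => hl Y (by simp [hY]))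
        (fun u v hu ht => hps u v hu (tame_mono (by
          intro i hi; simp at hi ⊢; tauto) ht))
        t₃ hInv₃ hpre₃ hp₃ hcp₃g
        (fun Y hY => by
          have hYg : Y ≠ g := (hl Y (by simp [hY])).1
          have hYX : Y ≠ X := fun he => (List.nodup_cons.mp hnd).1 (he ▸ hY)
          rw [(hfr₃ Y hYg).1, hfr₂ Y hYg hYX, hfr₁ Y hYg]
          exact hls Y (by simp [hY]))
    have hXnl' : X ∉ l' := (List.nodup_cons.mp hnd).1
    refine ⟨t₄, reach_trans hr₁ (reach_trans hr₂ (reach_trans hr₃ hr₄)), hInv₄,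
      hpre₄, hp₄, hcp₄g, ?_, ?_, ?_, ?_⟩
    · intro Y hY
      rcases List.mem_cons.mp hY with h | h
      · subst h
        rw [hfr₄ Y hXg hXnl', (hfr₃ Y hXg).1, hcp₂X]
      · exact hl₄ Y h
    · intro j hjg hjl
      have hjX : j ≠ X := fun he => hjl (he ▸ List.mem_cons_self (a := X) (l := l'))
      have hjl' : j ∉ l' := fun he => hjl (List.mem_cons_of_mem X he)
      rw [hfr₄ j hjg hjl', (hfr₃ j hjg).1, hfr₂ j hjg hjX, hfr₁ j hjg]
    · intro j hjE hjg
      rcases hnE₄ j hjE hjg with h | h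
      · rw [h, (hfr₃ j hjg).2]
        rcases hnE₂ j hjE hjg with h2 | h2
        · rw [h2]; exact hnE₁ j hjE hjg
        · exact Or.inr h2
      · exact Or.inr h
    · intro j hjE
      have hjg : j ≠ g := fun he => hgE (he ▸ hjE)
      rcases hE₄ j hjE with h | h
      · exact Or.inl h
      · rw [h, (hfr₃ j hjg).2]
        rcases hE₂ j hjE with h2 | h2
        · exact Or.inl h2
        · rw [h2]; exact hE₁ j hjE

/-- Haul all cans in `l` from `b + C/2` down to `b`, ending with `g` at `b`. -/
lemma teardown_loop (hB : 1 ≤ B) (hC : 0 < C) {b : ℝ} {pre : MaddexState N → Prop}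
    {EXC : Finset (Fin N)} (cap : CapAt C B i₀ b pre EXC)
    {g : Fin N} (hgi : g ≠ i₀) (hgE : g ∉ EXC) :
    ∀ (l : List (Fin N)), l.Nodup → (∀ X ∈ l, X ≠ g ∧ X ∉ EXC) →
      (∀ u v, pre u → Tame C (insert g l.toFinset) u v → pre v) →
      ∀ (s : MaddexState N), Inv C i₀ s → pre s → s.pos = b + C / 2 →
      s.canPos g = b + C / 2 → C / 2 ≤ s.tank + s.canFuel g →
      (∀ X ∈ l, s.canPos X = b + C / 2) →
      ∃ t, Reach C B i₀ s t ∧ Inv C i₀ t ∧ pre t ∧ t.pos = b ∧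
        t.canPos g = b ∧ (∀ X ∈ l, t.canPos X = b) ∧
        (∀ j, j ≠ g → j ∉ l → t.canPos j = s.canPos j) ∧
        (∀ j, j ∉ EXC → j ≠ g → (t.canFuel j = s.canFuel j ∨ t.canFuel j = C)) ∧
        (∀ j ∈ EXC, C / 2 ≤ t.canFuel j ∨ t.canFuel j = s.canFuel j) := by
  intro l
  induction l with
  | nil =>
    intro _ _ hps s hInv hpre hx hgx hfg _
    have hps' : ∀ u v, pre u → Tame C {g} u v → pre v := fun u v hu ht =>
      hps u v hu (tame_mono (by intro i hi; simp at hi; simp [hi]) ht)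
    obtain ⟨n, hn⟩ := exists_nat_ge C
    have habs : |b - s.pos| = C / 2 := by
      rw [hx, abs_of_nonpos (by linarith)]; ring
    obtain ⟨t₁, hr₁, hInv₁, hp₁, hcp₁g, hfr₁⟩ :=
      dsip_any hB hC g hgi n s b hInv (by rw [hgx, hx])
        (by rw [habs]; linarith) (by rw [habs]; linarith)
    exact ⟨t₁, hr₁, hInv₁, hps' s t₁ hpre (frame_tame (Finset.mem_singleton_self g) hfr₁),
      hp₁, hcp₁g, fun X hX => absurd hX (by simp),
      fun j hjg _ => (hfr₁ j hjg).1, fun j _ hjg => Or.inl (hfr₁ j hjg).2,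
      fun j hjE => Or.inr (hfr₁ j (fun he => hgE (he ▸ hjE))).2⟩
  | cons X l' ih =>
    intro hnd hl hps s hInv hpre hx hgx hfg hls
    obtain ⟨hXg, hXE⟩ := hl X (by simp)
    have hps' : ∀ u v, pre u → Tame C {g} u v → pre v := fun u v hu ht =>
      hps u v hu (tame_mono (by intro i hi; simp at hi; simp [hi]) ht)
    have hpsX : ∀ u v, pre u → Tame C {X, g} u v → pre v := fun u v hu ht =>
      hps u v hu (tame_mono (by intro i hi; simp at hi; rcases hi with h | h <;> simp [h]) ht)
    obtain ⟨n, hn⟩ := exists_nat_ge C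
    obtain ⟨t₁, hr₁, hInv₁, hpre₁, hp₁, hcp₁g, hcp₁X, hfr₁, hnE₁, hE₁⟩ :=
      moveloop_down hB hC cap hgi hgE hXg hpsX n s (b + C / 2) hInv hpre hx hgx
        (hls X (by simp)) (by linarith) le_rfl (by simp; linarith)
        (by linarith)
    obtain ⟨t₂, hr₂, hInv₂, hpre₂, hp₂, ht₂, hcp₂g, hcf₂g, hfr₂, hnE₂, hE₂⟩ :=
      ferry hB hC cap hgi hgE hps' t₁ b (b + C / 2) 1 (C / 2) hInv₁ hpre₁ hp₁ hcp₁g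
        le_rfl (by linarith) (by linarith [hInv₁.1, (hInv₁.2.2.1 g).1])
        (by linarith) (by linarith) zero_le_one le_rfl (by linarith) (by linarith)
        (by ring)
    have hXnl' : X ∉ l' := (List.nodup_cons.mp hnd).1
    obtain ⟨t₃, hr₃, hInv₃, hpre₃, hp₃, hcp₃g, hl₃, hfr₃, hnE₃, hE₃⟩ :=
      ih (List.Nodup.of_cons hnd) (fun Y hY => hl Y (by simp [hY]))
        (fun u v hu ht => hps u v hu (tame_mono (by
          intro i hi; simp at hi ⊢; tauto) ht))
        t₂ hInv₂ hpre₂ hp₂ hcp₂g (by rw [ht₂, hcf₂g]; linarith)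
        (fun Y hY => by
          have hYg : Y ≠ g := (hl Y (by simp [hY])).1
          have hYX : Y ≠ X := fun he => hXnl' (he ▸ hY)
          rw [hfr₂ Y hYg, hfr₁ Y hYg hYX]
          exact hls Y (by simp [hY]))
    refine ⟨t₃, reach_trans hr₁ (reach_trans hr₂ hr₃), hInv₃, hpre₃, hp₃, hcp₃g,
      ?_, ?_, ?_, ?_⟩
    · intro Y hY
      rcases List.mem_cons.mp hY with h | h
      · subst h
        rw [hfr₃ Y hXg hXnl', hfr₂ Y hXg, hcp₁X]
      · exact hl₃ Y h
    · intro j hjg hjl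
      have hjX : j ≠ X := fun he => hjl (he ▸ List.mem_cons_self (a := X) (l := l'))
      have hjl' : j ∉ l' := fun he => hjl (List.mem_cons_of_mem X he)
      rw [hfr₃ j hjg hjl', hfr₂ j hjg, hfr₁ j hjg hjX]
    · intro j hjE hjg
      rcases hnE₃ j hjE hjg with h | h
      · rw [h]
        rcases hnE₂ j hjE hjg with h2 | h2
        · rw [h2]; exact hnE₁ j hjE hjg
        · exact Or.inr h2
      · exact Or.inr h
    · intro j hjE
      have hjg : j ≠ g := fun he => hgE (he ▸ hjE)
      rcases hE₃ j hjE with h | h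
      · exact Or.inl h
      · rw [h]
        rcases hE₂ j hjE with h2 | h2
        · exact Or.inl h2
        · rw [h2]; exact hE₁ j hjE

lemma tame_of_clauses {EXC W : Finset (Fin N)} {s t : MaddexState N}
    (hInv : Inv C i₀ s)
    (hpos : ∀ j, j ∉ W → t.canPos j = s.canPos j)
    (hnE : ∀ j, j ∉ EXC → j ∉ W → (t.canFuel j = s.canFuel j ∨ t.canFuel j = C))
    (hE : ∀ j ∈ EXC, C / 2 ≤ t.canFuel j ∨ t.canFuel j = s.canFuel j) :
    Tame C W s t := by
  intro i hi
  refine ⟨hpos i hi, ?_⟩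
  by_cases hiE : i ∈ EXC
  · rcases hE i hiE with h | h
    · exact Or.inr (Or.inl h)
    · exact Or.inl h
  · rcases hnE i hiE hi with h | h
    · exact Or.inl h
    · exact Or.inr (Or.inr (h ▸ (hInv.2.2.1 i).2))

/-- Main induction: with `k` helper cans `H` at base `b` and the capability to
refill at `b`, the payload `i₀` can be delivered to `b + (k*C+1)/2`, everything
else returning to `b`. -/
lemma grand (hB : 1 ≤ B) (hC : 0 < C) :
    ∀ (k : ℕ) (b : ℝ) (pre : MaddexState N → Prop) (EXC : Finset (Fin N))
      (H : Finset (Fin N)), H.card = k → i₀ ∉ H →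
      (∀ j ∈ EXC, j ∉ H ∧ j ≠ i₀) →
      CapAt C B i₀ b pre EXC →
      (∀ u v, pre u → Tame C (insert i₀ H) u v → pre v) →
      ∀ (s : MaddexState N), Inv C i₀ s → pre s → s.pos = b → s.tank = 1 →
      s.canPos i₀ = b → (∀ i ∈ H, s.canPos i = b) →
      (∀ j ∈ EXC, s.canPos j < b + C / 2) →
      ∃ t, Reach C B i₀ s t ∧ Inv C i₀ t ∧ pre t ∧ t.pos = b ∧
        t.canPos i₀ = b + ((k : ℝ) * C + 1) / 2 ∧
        (∀ i ∈ H, t.canPos i = b) ∧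
        Tame C (insert i₀ H) s t := by
  intro k
  induction k with
  | zero =>
    intro b pre EXC H hcard hi₀H hEXC cap hps s hInv hpre hx htank hi₀x hHx hEXCx
    have hHe : H = ∅ := Finset.card_eq_zero.mp hcard
    obtain ⟨t₁, hr₁, hp₁, ht₁, hcp₁i, hcp₁, hcf₁⟩ :=
      rdrive1 (C := C) (i₀ := i₀) hB s (b + 1/2) i₀ (by rw [hi₀x, hx])
        (by rw [htank, hx, show |b + 1/2 - b| = 1/2 by rw [show b + 1/2 - b = (1:ℝ)/2 by ring, abs_of_nonneg]; norm_num]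
            norm_num)
    have habs1 : |b + 1/2 - s.pos| = 1/2 := by
      rw [hx, show b + 1/2 - b = (1:ℝ)/2 by ring, abs_of_nonneg] <;> norm_num
    obtain ⟨t₂, hr₂, hp₂, ht₂, hcp₂, hcf₂⟩ :=
      rdrive0 (C := C) (B := B) (i₀ := i₀) t₁ b
        (by rw [hp₁, ht₁, htank, habs1,
              show |b - (b + 1/2)| = 1/2 by rw [show b - (b + 1/2) = -(1/2 : ℝ) by ring, abs_neg, abs_of_nonneg] <;> norm_num]
            norm_num)
    have habs2 : |b - t₁.pos| = 1/2 := by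
      rw [hp₁, show b - (b + 1/2) = -(1/2 : ℝ) by ring, abs_neg, abs_of_nonneg] <;> norm_num
    have hTame : Tame C (insert i₀ H) s t₂ := by
      intro j hj
      have hji : j ≠ i₀ := by
        simp only [Finset.mem_insert, not_or] at hj
        exact hj.1
      rw [hcp₂ j, hcf₂ j, hcp₁ j hji, hcf₁ j]
      exact ⟨rfl, Or.inl rfl⟩
    have hInv₂ : Inv C i₀ t₂ := by
      refine ⟨?_, ?_, fun i => ?_, ?_⟩
      · rw [ht₂, habs2, ht₁, habs1, htank]; norm_num
      · rw [ht₂, habs2, ht₁, habs1, htank]; norm_num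
      · rw [hcf₂ i, hcf₁ i]; exact hInv.2.2.1 i
      · rw [hcf₂ i₀, hcf₁ i₀]; exact hInv.2.2.2
    refine ⟨t₂, reach_trans hr₁ hr₂, hInv₂, hps s t₂ hpre hTame, hp₂, ?_,
      fun i hi => absurd hi (by rw [hHe]; exact Finset.notMem_empty i), hTame⟩
    rw [hcp₂ i₀, hcp₁i]
    norm_num
  | succ k ih =>
    intro b pre EXC H hcard hi₀H hEXC cap hps s hInv hpre hx htank hi₀x hHx hEXCx
    obtain ⟨g, hgH⟩ := Finset.card_pos.mp (by omega : 0 < H.card)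
    set H' := H.erase g with hH'
    have hH'card : H'.card = k := by
      rw [hH', Finset.card_erase_of_mem hgH, hcard]
      omega
    have hgH' : g ∉ H' := by rw [hH']; exact Finset.notMem_erase g H
    have hmemH' : ∀ {x : Fin N}, x ∈ H' ↔ x ≠ g ∧ x ∈ H := by
      intro x; rw [hH']; exact Finset.mem_erase
    have hgi : g ≠ i₀ := fun he => hi₀H (he ▸ hgH)
    have hgE : g ∉ EXC := fun he => (hEXC g he).1 hgH
    have hi₀H' : i₀ ∉ H' := fun he => hi₀H (Finset.mem_of_mem_erase he)
    have hH'sub : H' ⊆ H := Finset.erase_subset g H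
    -- the list of cans to haul up
    set l := i₀ :: H'.toList with hldef
    have hnd : l.Nodup := by
      rw [hldef, List.nodup_cons]
      exact ⟨fun he => hi₀H' ((Finset.mem_toList).mp he), Finset.nodup_toList H'⟩
    have hlW : ∀ X ∈ l, X = i₀ ∨ X ∈ H' := by
      intro X hX
      rcases List.mem_cons.mp hX with h | h
      · exact Or.inl h
      · exact Or.inr (Finset.mem_toList.mp h)
    have hl : ∀ X ∈ l, X ≠ g ∧ X ∉ EXC := by
      intro X hX
      rcases hlW X hX with h | h
      · subst h
        exact ⟨Ne.symm hgi, fun he => (hEXC X he).2 rfl⟩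
      · exact ⟨(hmemH'.mp h).1, fun he => (hEXC X he).1 (hH'sub h)⟩
    have hsubW : insert g l.toFinset ⊆ insert i₀ H := by
      intro i hi
      rcases Finset.mem_insert.mp hi with h | h
      · exact h ▸ Finset.mem_insert_of_mem hgH
      · rw [hldef] at h
        simp at h
        rcases h with h | h
        · exact h ▸ Finset.mem_insert_self i₀ H
        · exact Finset.mem_insert_of_mem (hH'sub h)
    have hps_loop : ∀ u v, pre u → Tame C (insert g l.toFinset) u v → pre v :=
      fun u v hu ht => hps u v hu (tame_mono hsubW ht)
    have hps' : ∀ u v, pre u → Tame C {g} u v → pre v := fun u v hu ht =>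
      hps u v hu (tame_mono (by
        intro i hi
        rw [Finset.mem_singleton] at hi
        exact hi ▸ Finset.mem_insert_of_mem hgH) ht)
    -- 1. haul everything up
    obtain ⟨t₁, hr₁, hInv₁, hpre₁, hp₁, hcp₁g, hl₁, hfr₁, hnE₁, hE₁⟩ :=
      setup_loop hB hC cap hgi hgE l hnd hl hps_loop s hInv hpre hx
        (hHx g hgH)
        (by intro X hX
            rcases hlW X hX with h | h
            · exact h ▸ hi₀x
            · exact hHx X (hH'sub h))
    -- 2. bring g up
    obtain ⟨t₂, hr₂, hInv₂, hpre₂, hp₂, ht₂, hcp₂g, hcf₂g, hfr₂, hnE₂, hE₂⟩ :=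
      ferry hB hC cap hgi hgE hps' t₁ b (b + C / 2) 1 (C / 2) hInv₁ hpre₁ hp₁
        hcp₁g le_rfl (by linarith)
        (by linarith [hInv₁.1, (hInv₁.2.2.1 g).1]) (by linarith) (by linarith)
        zero_le_one le_rfl (by linarith) (by linarith) (by ring)
    -- 3. derived capability
    have cap'' := capderive hB hC cap hgi hgE hps'
    -- 4. call it once to fill everything at b + C/2
    have hpre₂'' : pre t₂ ∧ t₂.canPos g = b + C / 2 ∧ C / 2 ≤ t₂.canFuel g ∧
        (∀ j ∈ EXC, t₂.canPos j < b + C / 2) := by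
      refine ⟨hpre₂, hcp₂g, by rw [hcf₂g], ?_⟩
      intro j hj
      have hjg : j ≠ g := fun he => hgE (he ▸ hj)
      have hjl : j ∉ l := fun he => (hl j he).2 hj
      rw [hfr₂ j hjg, hfr₁ j hjg hjl]
      exact hEXCx j hj
    obtain ⟨t₃, hr₃, hInv₃, hp₃, ht₃, hcp₃, hcfb₃, hnE₃, hE₃⟩ :=
      cap'' t₂ hInv₂ hp₂ hpre₂''
    have T3 : Tame C (insert i₀ H) t₂ t₃ := by
      intro j hj
      refine ⟨hcp₃ j, ?_⟩
      by_cases hjE : j ∈ insert g EXC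
      · rcases hE₃ j hjE with h | h
        · exact Or.inr (Or.inl h)
        · exact Or.inl h
      · rcases hnE₃ j hjE with h | h
        · exact Or.inl h
        · exact Or.inr (Or.inr (h ▸ (hInv₂.2.2.1 j).2))
    have hpre₃'' : pre t₃ ∧ t₃.canPos g = b + C / 2 ∧ C / 2 ≤ t₃.canFuel g ∧
        (∀ j ∈ EXC, t₃.canPos j < b + C / 2) := by
      refine ⟨hps t₂ t₃ hpre₂ T3, ?_, ?_, ?_⟩
      · rw [hcp₃ g]; exact hcp₂g
      · rcases hE₃ g (Finset.mem_insert_self g EXC) with h | h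
        · exact h
        · rw [h, hcf₂g]
      · intro j hj
        rw [hcp₃ j]
        exact hpre₂''.2.2.2 j hj
    -- 5. induction
    obtain ⟨t₄, hr₄, hInv₄, hpre₄, hp₄, hi₀₄, hH₄, hTame₄⟩ :=
      ih (b + C / 2)
        (fun u => pre u ∧ u.canPos g = b + C / 2 ∧ C / 2 ≤ u.canFuel g ∧
          (∀ j ∈ EXC, u.canPos j < b + C / 2))
        (insert g EXC) H' hH'card hi₀H'
        (by intro j hj
            rcases Finset.mem_insert.mp hj with h | h
            · exact h ▸ ⟨hgH', hgi⟩
            · exact ⟨fun he => (hEXC j h).1 (hH'sub he), (hEXC j h).2⟩)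
        cap''
        (by intro u v hu ht
            have hgW : g ∉ insert i₀ H' := by
              intro he
              rcases Finset.mem_insert.mp he with h | h
              · exact hgi h
              · exact hgH' h
            obtain ⟨hu1, hu2, hu3, hu4⟩ := hu
            refine ⟨hps u v hu1 (tame_mono (by
                intro i hi
                rcases Finset.mem_insert.mp hi with h | h
                · exact h ▸ Finset.mem_insert_self i₀ H
                · exact Finset.mem_insert_of_mem (hH'sub h)) ht), ?_, ?_, ?_⟩
            · rw [(ht g hgW).1]; exact hu2
            · rcases (ht g hgW).2 with h | h | h
              · rw [h]; exact hu3
              · exact h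
              · linarith
            · intro j hj
              have hjW : j ∉ insert i₀ H' := by
                simp [(hEXC j hj).2, fun he => (hEXC j hj).1 (hH'sub he)]
                exact fun he => (hEXC j hj).1 (hH'sub he)
              rw [(ht j hjW).1]; exact hu4 j hj)
        t₃ hInv₃ hpre₃'' hp₃ ht₃
        (by rw [hcp₃ i₀, hfr₂ i₀ (Ne.symm hgi), hl₁ i₀ (by rw [hldef]; simp)])
        (by intro i hi
            have hig : i ≠ g := (hmemH'.mp hi).1
            rw [hcp₃ i, hfr₂ i hig, hl₁ i (by rw [hldef]; simp [hi])])
        (by intro j hj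
            rcases Finset.mem_insert.mp hj with h | h
            · subst h; rw [hpre₃''.2.1]; linarith
            · have := hpre₃''.2.2.2 j h; linarith)
    -- 6. teardown
    have hgW' : g ∉ insert i₀ H' := by
      intro he
      rcases Finset.mem_insert.mp he with h | h
      · exact hgi h
      · exact hgH' h
    have hg₄pos : t₄.canPos g = b + C / 2 := hpre₄.2.1
    have hg₄fuel : C / 2 ≤ t₄.canFuel g := hpre₄.2.2.1
    have hps_loop2 : ∀ u v, pre u → Tame C (insert g H'.toList.toFinset) u v → pre v := by
      intro u v hu ht
      refine hps u v hu (tame_mono (by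
        intro i hi
        rcases Finset.mem_insert.mp hi with h | h
        · exact h ▸ Finset.mem_insert_of_mem hgH
        · simp at h
          exact Finset.mem_insert_of_mem (hH'sub h)) ht)
    obtain ⟨t₅, hr₅, hInv₅, hpre₅, hp₅, hcp₅g, hl₅, hfr₅, hnE₅, hE₅⟩ :=
      teardown_loop hB hC cap hgi hgE H'.toList (Finset.nodup_toList H')
        (fun X hX => hl X (by rw [hldef]; exact List.mem_cons_of_mem i₀ hX))
        hps_loop2 t₄ hInv₄ hpre₄.1 hp₄ hg₄pos
        (by linarith [hInv₄.1])
        (by intro X hX; exact hH₄ X (Finset.mem_toList.mp hX))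
    -- final assembly
    refine ⟨t₅, reach_trans hr₁ (reach_trans hr₂ (reach_trans hr₃ (reach_trans hr₄ hr₅))),
      hInv₅, hpre₅, hp₅, ?_, ?_, ?_⟩
    · have h1 : t₅.canPos i₀ = t₄.canPos i₀ := by
        refine hfr₅ i₀ (Ne.symm hgi) (fun he => hi₀H' (Finset.mem_toList.mp he))
      rw [h1, hi₀₄]
      push_cast
      ring
    · intro i hi
      by_cases hig : i = g
      · subst hig; exact hcp₅g
      · exact hl₅ i (Finset.mem_toList.mpr (hmemH'.mpr ⟨hig, hi⟩))
    · -- Tame composition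
      have T1 : Tame C (insert i₀ H) s t₁ :=
        tame_of_clauses hInv
          (fun j hj => hfr₁ j (fun he => hj (he ▸ Finset.mem_insert_of_mem hgH))
            (fun he => hj (hsubW (Finset.mem_insert_of_mem (List.mem_toFinset.mpr he)))))
          (fun j hjE hjW => hnE₁ j hjE (fun he => hjW (he ▸ Finset.mem_insert_of_mem hgH)))
          hE₁
      have T2 : Tame C (insert i₀ H) t₁ t₂ :=
        tame_of_clauses hInv₁
          (fun j hj => hfr₂ j (fun he => hj (he ▸ Finset.mem_insert_of_mem hgH)))
          (fun j hjE hjW => hnE₂ j hjE (fun he => hjW (he ▸ Finset.mem_insert_of_mem hgH)))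
          hE₂
      have T4 : Tame C (insert i₀ H) t₃ t₄ := by
        refine tame_mono ?_ hTame₄
        intro i hi
        rcases Finset.mem_insert.mp hi with h | h
        · exact h ▸ Finset.mem_insert_self i₀ H
        · exact Finset.mem_insert_of_mem (hH'sub h)
      have T5 : Tame C (insert i₀ H) t₄ t₅ :=
        tame_of_clauses hInv₄
          (fun j hj => hfr₅ j (fun he => hj (he ▸ Finset.mem_insert_of_mem hgH))
            (fun he => hj (Finset.mem_insert_of_mem (hH'sub (Finset.mem_toList.mp he)))))
          (fun j hjE hjW => hnE₅ j hjE (fun he => hjW (he ▸ Finset.mem_insert_of_mem hgH)))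
          hE₅
      exact tame_trans T1 (tame_trans T2 (tame_trans T3 (tame_trans T4 T5)))

/-- Extract an indexed chain from reflexive-transitive closure. -/
lemma reach_chain {s t : MaddexState N} (h : Reach C B i₀ s t) :
    ∃ (k : ℕ) (f : ℕ → MaddexState N), f 0 = s ∧ f k = t ∧
      ∀ j < k, Step C B i₀ (f j) (f (j + 1)) := by
  induction h with
  | refl => exact ⟨0, fun _ => s, rfl, rfl, fun j hj => absurd hj (by omega)⟩
  | @tail u v h₁ step ih =>
    obtain ⟨k, f, hf0, hfk, hstep⟩ := ih
    refine ⟨k + 1, fun j => if j < k + 1 then f j else v, by simp [hf0], by simp, ?_⟩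
    intro j hj
    rcases lt_or_eq_of_le (Nat.lt_succ_iff.mp hj) with h' | h'
    · simpa [Nat.lt_succ_of_lt h', h', Nat.succ_lt_succ h'] using hstep j h'
    · subst h'
      simpa [Nat.lt_succ_self, hfk] using step

end MaddexAux

/-- With `N ≥ 1` cans, there is a plan whose final state has the jeep at `0`,
one distinguished can full at position `D_{N−1} = ((N−1)·C + 1)/2`, and the
other `N − 1` cans at `0`, such that the distinguished can is full in every
state of the plan (no fuel of this can is ever used). -/
theorem maddex_dump_full_can (N B : ℕ) (C : ℝ) (hC : 0 < C) (hB : 1 ≤ B)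
    (hN : 1 ≤ N) :
    ∃ (k : ℕ) (f : ℕ → MaddexState N) (i₀ : Fin N),
      f 0 = maddexInit N C ∧
      (∀ j < k, MaddexStep C B (f j) (f (j + 1))) ∧
      (f k).pos = 0 ∧
      (f k).canPos i₀ = (((N : ℝ) - 1) * C + 1) / 2 ∧
      (∀ i : Fin N, i ≠ i₀ → (f k).canPos i = 0) ∧
      (∀ j ≤ k, (f j).canFuel i₀ = C) := by
  have hN0 : 0 < N := hN
  set i₀ : Fin N := ⟨0, hN0⟩ with hi₀def
  set H : Finset (Fin N) := Finset.univ.erase i₀ with hHdef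
  have hcard : H.card = N - 1 := by
    rw [hHdef, Finset.card_erase_of_mem (Finset.mem_univ i₀), Finset.card_univ,
      Fintype.card_fin]
  have hi₀H : i₀ ∉ H := by rw [hHdef]; exact Finset.notMem_erase i₀ _
  have hInv0 : MaddexAux.Inv C i₀ (maddexInit N C) :=
    ⟨zero_le_one, le_rfl, fun i => ⟨hC.le, le_rfl⟩, rfl⟩
  obtain ⟨t, hr, hInvt, _, hpos, hi₀pos, hHpos, _⟩ :=
    MaddexAux.grand (i₀ := i₀) hB hC (N - 1) 0 (fun _ => True) ∅ H hcard hi₀H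
      (fun j hj => absurd hj (Finset.notMem_empty j))
      (MaddexAux.cap_root hC) (fun u v _ _ => trivial)
      (maddexInit N C) hInv0 trivial rfl rfl rfl
      (fun i _ => rfl) (fun j hj => absurd hj (Finset.notMem_empty j))
  obtain ⟨k, f, hf0, hfk, hstep⟩ := MaddexAux.reach_chain hr
  have hfuel : ∀ j ≤ k, (f j).canFuel i₀ = C := by
    intro j
    induction j with
    | zero => intro _; rw [hf0]; rfl
    | succ j ihj =>
      intro hjk
      rw [(hstep j (by omega)).2, ihj (by omega)]
  refine ⟨k, f, i₀, hf0, fun j hj => (hstep j hj).1, by rw [hfk]; exact hpos, ?_, ?_, hfuel⟩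
  · rw [hfk, hi₀pos]
    have : ((N - 1 : ℕ) : ℝ) = (N : ℝ) - 1 := by
      push_cast [hN]
      ring
    rw [this]
    ring
  · intro i hi
    rw [hfk]
    exact hHpos i (by rw [hHdef]; exact Finset.mem_erase.mpr ⟨hi, Finset.mem_univ i⟩)
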